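/- The collective dissipative channels do not change the weight of any state in the fully symmetric subspace: for every linear operator ρ on (ℂ²)^{⊗N}, Tr(P_sym (J₋ ρ J₊ − ½{J₊J₋, ρ}) P_sym) = 0 and Tr(P_sym (J₊ ρ J₋ − ½{J₋J₊, ρ}) P_sym) = 0. -/
import Mathlib


/-! STATEMENT 2: The collective dissipative channels do not change the weight
of any state in the fully symmetric subspace: for every linear operator ρ on
(ℂ²)^{⊗N}, Tr(P_sym (J₋ ρ J₊ − ½{J₊J₋, ρ}) P_sym) = 0 and
Tr(P_sym (J₊ ρ J₋ − ½{J₋J₊, ρ}) P_sym) = 0. -/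

open Matrix BigOperators

noncomputable section

/-- Operators on the N-qubit Hilbert space (ℂ²)^{⊗N}, represented as matrices
in the computational basis indexed by bit strings `Fin N → Fin 2`. -/
abbrev QOp (N : ℕ) : Type := Matrix (Fin N → Fin 2) (Fin N → Fin 2) ℂ

/-- Vectors of the N-qubit Hilbert space (ℂ²)^{⊗N}. -/
abbrev QVec (N : ℕ) : Type := (Fin N → Fin 2) → ℂ

/-- The raising operator σ₊ = |1⟩⟨0| acting on site `i` (identity elsewhere). -/
def sigmaPlus (N : ℕ) (i : Fin N) : QOp N :=
  Matrix.of fun x y => if x i = 1 ∧ y i = 0 ∧ ∀ j, j ≠ i → x j = y j then 1 else 0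

/-- The lowering operator σ₋ = |0⟩⟨1| acting on site `i` (identity elsewhere). -/
def sigmaMinus (N : ℕ) (i : Fin N) : QOp N :=
  Matrix.of fun x y => if x i = 0 ∧ y i = 1 ∧ ∀ j, j ≠ i → x j = y j then 1 else 0

/-- Collective raising operator J₊ = Σᵢ σ₊^(i). -/
def Jplus (N : ℕ) : QOp N := ∑ i, sigmaPlus N i

/-- Collective lowering operator J₋ = Σᵢ σ₋^(i). -/
def Jminus (N : ℕ) : QOp N := ∑ i, sigmaMinus N i

/-- The unitary permuting the N tensor factors according to `π`:
it maps the basis state |x⟩ to the basis state |x ∘ π⁻¹⟩. -/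
def permMatrix (N : ℕ) (π : Equiv.Perm (Fin N)) : QOp N :=
  Matrix.of fun x y => if (fun i => x (π i)) = y then 1 else 0

/-- `P` is the orthogonal projector onto the fully symmetric subspace of
(ℂ²)^{⊗N}: it is idempotent, self-adjoint, and its fixed points are exactly
the vectors invariant under every permutation of the N tensor factors. -/
def IsSymProjector (N : ℕ) (P : QOp N) : Prop :=
  P * P = P ∧ Pᴴ = P ∧
    ∀ v : QVec N, P.mulVec v = v ↔
      ∀ π : Equiv.Perm (Fin N), (permMatrix N π).mulVec v = v

/-! ### Auxiliary lemmas -/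

lemma QOp.ext_of_mulVec (N : ℕ) (A B : QOp N)
    (h : ∀ v : QVec N, A.mulVec v = B.mulVec v) : A = B := by
  ext x y
  have := congrFun (h (Pi.single y 1)) x
  simpa [Matrix.mulVec_single] using this

lemma permMatrix_mul (N : ℕ) (π : Equiv.Perm (Fin N)) (M : QOp N) :
    permMatrix N π * M = Matrix.of fun x y => M (fun i => x (π i)) y := by
  ext x y
  simp only [Matrix.mul_apply, permMatrix, Matrix.of_apply, ite_mul, one_mul, zero_mul]
  rw [Finset.sum_ite_eq]
  simp

lemma mul_permMatrix (N : ℕ) (π : Equiv.Perm (Fin N)) (M : QOp N) :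
    M * permMatrix N π = Matrix.of fun x y => M x (fun i => y (π⁻¹ i)) := by
  ext x y
  simp only [Matrix.mul_apply, permMatrix, Matrix.of_apply, mul_ite, mul_one, mul_zero]
  have : ∀ z : Fin N → Fin 2, ((fun i => z (π i)) = y) = (z = fun i => y (π⁻¹ i)) := by
    intro z
    apply propext
    constructor <;> intro h
    · funext i; have := congrFun h (π⁻¹ i); simpa using this
    · funext i; have := congrFun h (π i); simp [this]
  simp only [this]
  rw [Finset.sum_ite_eq']
  simp

lemma perm_mul_sigmaPlus (N : ℕ) (π : Equiv.Perm (Fin N)) (i : Fin N) :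
    permMatrix N π * sigmaPlus N i = sigmaPlus N (π i) * permMatrix N π := by
  rw [permMatrix_mul, mul_permMatrix]
  ext x y
  simp only [Matrix.of_apply, sigmaPlus]
  congr 1
  apply propext
  constructor
  · rintro ⟨h1, h2, h3⟩
    refine ⟨h1, by simpa using h2, fun j hj => ?_⟩
    have := h3 (π⁻¹ j) (by intro h; apply hj; rw [← h]; simp)
    simpa using this
  · rintro ⟨h1, h2, h3⟩
    refine ⟨h1, by simpa using h2, fun j hj => ?_⟩
    have := h3 (π j) (by intro h; apply hj; exact π.injective h)
    simpa using this

lemma perm_mul_sigmaMinus (N : ℕ) (π : Equiv.Perm (Fin N)) (i : Fin N) :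
    permMatrix N π * sigmaMinus N i = sigmaMinus N (π i) * permMatrix N π := by
  rw [permMatrix_mul, mul_permMatrix]
  ext x y
  simp only [Matrix.of_apply, sigmaMinus]
  congr 1
  apply propext
  constructor
  · rintro ⟨h1, h2, h3⟩
    refine ⟨h1, by simpa using h2, fun j hj => ?_⟩
    have := h3 (π⁻¹ j) (by intro h; apply hj; rw [← h]; simp)
    simpa using this
  · rintro ⟨h1, h2, h3⟩
    refine ⟨h1, by simpa using h2, fun j hj => ?_⟩
    have := h3 (π j) (by intro h; apply hj; exact π.injective h)
    simpa using this

lemma perm_mul_Jplus (N : ℕ) (π : Equiv.Perm (Fin N)) :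
    permMatrix N π * Jplus N = Jplus N * permMatrix N π := by
  simp only [Jplus, Finset.mul_sum, Finset.sum_mul, perm_mul_sigmaPlus]
  exact Equiv.sum_comp π (fun k => sigmaPlus N k * permMatrix N π)

lemma perm_mul_Jminus (N : ℕ) (π : Equiv.Perm (Fin N)) :
    permMatrix N π * Jminus N = Jminus N * permMatrix N π := by
  simp only [Jminus, Finset.mul_sum, Finset.sum_mul, perm_mul_sigmaMinus]
  exact Equiv.sum_comp π (fun k => sigmaMinus N k * permMatrix N π)

lemma sigmaPlus_conjTranspose (N : ℕ) (i : Fin N) :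
    (sigmaPlus N i)ᴴ = sigmaMinus N i := by
  ext x y
  simp only [Matrix.conjTranspose_apply, sigmaPlus, sigmaMinus, Matrix.of_apply]
  rw [apply_ite (star : ℂ → ℂ), star_one, star_zero]
  refine if_congr ?_ rfl rfl
  constructor
  · rintro ⟨h1, h2, h3⟩; exact ⟨h2, h1, fun j hj => (h3 j hj).symm⟩
  · rintro ⟨h1, h2, h3⟩; exact ⟨h2, h1, fun j hj => (h3 j hj).symm⟩

lemma Jplus_conjTranspose (N : ℕ) : (Jplus N)ᴴ = Jminus N := by
  simp only [Jplus, Jminus]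
  rw [Matrix.conjTranspose_sum]
  exact Finset.sum_congr rfl fun i _ => sigmaPlus_conjTranspose N i

/-- The key commutation: an operator commuting with all `permMatrix` and whose
adjoint also does, commutes with `P`. Specialized below. -/
lemma P_mul_A_mul_P (N : ℕ) (P : QOp N) (hP : IsSymProjector N P) (A : QOp N)
    (hA : ∀ π : Equiv.Perm (Fin N), permMatrix N π * A = A * permMatrix N π) :
    P * A * P = A * P := by
  obtain ⟨hidem, _, hfix⟩ := hP
  apply QOp.ext_of_mulVec
  intro v
  have hPv : P.mulVec (P.mulVec v) = P.mulVec v := by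
    rw [Matrix.mulVec_mulVec, hidem]
  have hsym : ∀ π : Equiv.Perm (Fin N),
      (permMatrix N π).mulVec (A.mulVec (P.mulVec v)) = A.mulVec (P.mulVec v) := by
    intro π
    rw [Matrix.mulVec_mulVec, hA π, ← Matrix.mulVec_mulVec,
      (hfix (P.mulVec v)).mp hPv π]
  have := (hfix (A.mulVec (P.mulVec v))).mpr hsym
  calc (P * A * P).mulVec v = P.mulVec (A.mulVec (P.mulVec v)) := by
        rw [Matrix.mulVec_mulVec, Matrix.mulVec_mulVec]
    _ = A.mulVec (P.mulVec v) := this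
    _ = (A * P).mulVec v := by rw [Matrix.mulVec_mulVec]

lemma Jminus_conjTranspose (N : ℕ) : (Jminus N)ᴴ = Jplus N := by
  rw [← Jplus_conjTranspose, Matrix.conjTranspose_conjTranspose]

lemma P_comm_Jplus (N : ℕ) (P : QOp N) (hP : IsSymProjector N P) :
    P * Jplus N = Jplus N * P := by
  have h1 : P * Jplus N * P = Jplus N * P := P_mul_A_mul_P N P hP _ (perm_mul_Jplus N)
  have h2 : P * Jminus N * P = Jminus N * P := P_mul_A_mul_P N P hP _ (perm_mul_Jminus N)
  have hH := hP.2.1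
  have h3 := congrArg Matrix.conjTranspose h2
  simp only [Matrix.conjTranspose_mul, hH, Jminus_conjTranspose] at h3
  -- h3 : P * (Jplus N * P) = P * Jplus N
  calc P * Jplus N = P * (Jplus N * P) := h3.symm
    _ = P * Jplus N * P := (mul_assoc _ _ _).symm
    _ = Jplus N * P := h1

lemma P_comm_Jminus (N : ℕ) (P : QOp N) (hP : IsSymProjector N P) :
    P * Jminus N = Jminus N * P := by
  have h1 : P * Jminus N * P = Jminus N * P := P_mul_A_mul_P N P hP _ (perm_mul_Jminus N)
  have h2 : P * Jplus N * P = Jplus N * P := P_mul_A_mul_P N P hP _ (perm_mul_Jplus N)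
  have hH := hP.2.1
  have h3 := congrArg Matrix.conjTranspose h2
  simp only [Matrix.conjTranspose_mul, hH, Jplus_conjTranspose] at h3
  calc P * Jminus N = P * (Jminus N * P) := h3.symm
    _ = P * Jminus N * P := (mul_assoc _ _ _).symm
    _ = Jminus N * P := h1

lemma dissipator_trace_zero {n : Type*} [Fintype n] [DecidableEq n]
    (P A B ρ : Matrix n n ℂ) (hidem : P * P = P)
    (hA : P * A = A * P) (hB : P * B = B * P) :
    Matrix.trace (P * (B * ρ * A
        - (2 : ℂ)⁻¹ • (A * B * ρ + ρ * (A * B))) * P) = 0 := by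
  have h1 : Matrix.trace (P * (B * ρ * A) * P) = Matrix.trace (P * (A * B * ρ)) := by
    calc Matrix.trace (P * (B * ρ * A) * P)
        = Matrix.trace (P * (P * (B * ρ * A))) := Matrix.trace_mul_comm _ _
      _ = Matrix.trace (P * (B * ρ * A)) := by rw [← mul_assoc, hidem]
      _ = Matrix.trace ((P * (B * ρ)) * A) := by noncomm_ring
      _ = Matrix.trace (A * (P * (B * ρ))) := Matrix.trace_mul_comm _ _
      _ = Matrix.trace ((A * P) * (B * ρ)) := by noncomm_ring
      _ = Matrix.trace ((P * A) * (B * ρ)) := by rw [hA]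
      _ = Matrix.trace (P * (A * B * ρ)) := by noncomm_ring
  have h2 : Matrix.trace (P * (A * B * ρ) * P) = Matrix.trace (P * (A * B * ρ)) := by
    calc Matrix.trace (P * (A * B * ρ) * P)
        = Matrix.trace (P * (P * (A * B * ρ))) := Matrix.trace_mul_comm _ _
      _ = Matrix.trace (P * (A * B * ρ)) := by rw [← mul_assoc, hidem]
  have h3 : Matrix.trace (P * (ρ * (A * B)) * P) = Matrix.trace (P * (A * B * ρ)) := by
    calc Matrix.trace (P * (ρ * (A * B)) * P)
        = Matrix.trace (P * (P * (ρ * (A * B)))) := Matrix.trace_mul_comm _ _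
      _ = Matrix.trace (P * (ρ * (A * B))) := by rw [← mul_assoc, hidem]
      _ = Matrix.trace ((P * ρ) * (A * B)) := by noncomm_ring
      _ = Matrix.trace ((A * B) * (P * ρ)) := Matrix.trace_mul_comm _ _
      _ = Matrix.trace ((A * (B * P)) * ρ) := by noncomm_ring
      _ = Matrix.trace ((A * (P * B)) * ρ) := by rw [hB]
      _ = Matrix.trace (((A * P) * B) * ρ) := by noncomm_ring
      _ = Matrix.trace (((P * A) * B) * ρ) := by rw [hA]
      _ = Matrix.trace (P * (A * B * ρ)) := by noncomm_ring
  have expand : P * (B * ρ * A - (2 : ℂ)⁻¹ • (A * B * ρ + ρ * (A * B))) * P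
      = P * (B * ρ * A) * P
        - (2 : ℂ)⁻¹ • (P * (A * B * ρ) * P + P * (ρ * (A * B)) * P) := by
    rw [mul_sub, sub_mul, Matrix.mul_smul, Matrix.smul_mul, mul_add, add_mul]
  rw [expand, Matrix.trace_sub, Matrix.trace_smul, Matrix.trace_add, h1, h2, h3]
  rw [smul_eq_mul]
  ring

/-- Both collective dissipative channels preserve the symmetric-subspace weight. -/
theorem collective_dissipator_no_leakage (N : ℕ) (P : QOp N)
    (hP : IsSymProjector N P) (ρ : QOp N) :
    Matrix.trace (P * (Jminus N * ρ * Jplus N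
        - (2 : ℂ)⁻¹ • (Jplus N * Jminus N * ρ + ρ * (Jplus N * Jminus N))) * P) = 0 ∧
    Matrix.trace (P * (Jplus N * ρ * Jminus N
        - (2 : ℂ)⁻¹ • (Jminus N * Jplus N * ρ + ρ * (Jminus N * Jplus N))) * P) = 0 := by
  have hA := P_comm_Jplus N P hP
  have hB := P_comm_Jminus N P hP
  exact ⟨dissipator_trace_zero P (Jplus N) (Jminus N) ρ hP.1 hA hB,
    dissipator_trace_zero P (Jminus N) (Jplus N) ρ hP.1 hB hA⟩

end
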